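/- Let g ≥ m ≥ 1, let ζ and θ be states on a finite-dimensional system T, and let η be a state on T^{⊗m}, with η_{1:j} its marginal on the first j factors (η_{1:0} := 1) and η_i its marginal on the i-th factor. Define the state ν₂ := (1/g)[ ∑_{i=1}^{g−m} ζ^{⊗(i−1)} ⊗ η ⊗ θ^{⊗(g−m−i+1)} ⊗ |i⟩⟨i| + ∑_{i=g−m+1}^{g} ζ^{⊗(i−1)} ⊗ η_{1:g−i+1} ⊗ |i⟩⟨i| ] on T^{⊗g} ⊗ ℂ^g. Then: (a) the partial trace of ν₂ over the g-th T-factor equals ω := (1/g)[ ∑_{i=1}^{g−m−1} ζ^{⊗(i−1)} ⊗ η ⊗ θ^{⊗(g−m−i)} ⊗ |i⟩⟨i| + ∑_{i=g−m}^{g} ζ^{⊗(i−1)} ⊗ η_{1:g−i} ⊗ |i⟩⟨i| ]; (b) the partial trace of ν₂ over the first g−1 T-factors and the classical register equals (m/g)·ν'' + (1−m/g)·θ, where ν'' := (1/m) ∑_{i=1}^{m} η_i; (c) if moreover each η_i is supported on a subspace V of T and θ is supported on a subspace W of T orthogonal to V, then measuring the projector P_V on the state in (b) succeeds with probability m/g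 and the post-measurement state is ν''. -/

import Mathlib

open scoped BigOperators
open Matrix
open ComplexOrder

noncomputable section

namespace PaperQI

/-- The trace norm `tr √(MᴴM)` of a complex square matrix (sum of singular values). -/
noncomputable def traceNorm {ι : Type} [Fintype ι] [DecidableEq ι] (M : Matrix ι ι ℂ) : ℝ :=
  (((Matrix.posSemidef_conjTranspose_mul_self M).1.eigenvectorUnitary : Matrix ι ι ℂ) *
    diagonal (((↑) : ℝ → ℂ) ∘ (√·) ∘ (Matrix.posSemidef_conjTranspose_mul_self M).1.eigenvalues) *
    (star (Matrix.posSemidef_conjTranspose_mul_self M).1.eigenvectorUnitary : Matrix ι ι ℂ)).trace.re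

/-- The trace distance `Δ(ρ,σ) = ½‖ρ − σ‖₁`. -/
noncomputable def traceDist {ι : Type} [Fintype ι] [DecidableEq ι] (ρ σ : Matrix ι ι ℂ) : ℝ :=
  traceNorm (ρ - σ) / 2

/-- A quantum state: a positive semidefinite matrix of unit trace. -/
def IsState {ι : Type} [Fintype ι] (M : Matrix ι ι ℂ) : Prop :=
  M.PosSemidef ∧ M.trace = 1

/-- Kronecker/tensor product of two matrices, on the product index type. -/
def kron {ι κ : Type} (M : Matrix ι ι ℂ) (N : Matrix κ κ ℂ) :
    Matrix (ι × κ) (ι × κ) ℂ := fun p q => M p.1 q.1 * N p.2 q.2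

/-- The `n`-fold tensor power `ρ^{⊗n}`. -/
def tensorPow {ι : Type} (ρ : Matrix ι ι ℂ) (n : ℕ) :
    Matrix (Fin n → ι) (Fin n → ι) ℂ := fun x y => ∏ i, ρ (x i) (y i)

/-- Partial trace over the second tensor factor. -/
noncomputable def ptraceRight {ι κ : Type} [Fintype κ] (M : Matrix (ι × κ) (ι × κ) ℂ) :
    Matrix ι ι ℂ := fun a b => ∑ c, M (a, c) (b, c)

/-- Partial trace over the first tensor factor. -/
noncomputable def ptraceLeft {ι κ : Type} [Fintype ι] (M : Matrix (ι × κ) (ι × κ) ℂ) :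
    Matrix κ κ ℂ := fun a b => ∑ c, M (c, a) (c, b)

/-- Marginal of a multipartite state on `S^{⊗m}` on the `i`-th tensor factor. -/
noncomputable def marginal {ι : Type} [Fintype ι] [DecidableEq ι] {m : ℕ}
    (η : Matrix (Fin m → ι) (Fin m → ι) ℂ) (i : Fin m) : Matrix ι ι ℂ :=
  fun a b => ∑ x : Fin m → ι, if x i = a then η x (Function.update x i b) else 0

/-- The extension `id_τ ⊗ Φ` of a map on matrices, acting blockwise. -/
def rightExt {ι κ τ : Type} (Φ : Matrix ι ι ℂ → Matrix κ κ ℂ) :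
    Matrix (τ × ι) (τ × ι) ℂ → Matrix (τ × κ) (τ × κ) ℂ :=
  fun M p q => Φ (fun x y => M (p.1, x) (q.1, y)) p.2 q.2

/-- The extension `Φ ⊗ id_τ`. -/
def leftExt {ι κ τ : Type} (Φ : Matrix ι ι ℂ → Matrix κ κ ℂ) :
    Matrix (ι × τ) (ι × τ) ℂ → Matrix (κ × τ) (κ × τ) ℂ :=
  fun M p q => Φ (fun x y => M (x, p.2) (y, q.2)) p.1 q.1

/-- Complete positivity: every finite-dimensional extension `id ⊗ Φ` preserves
positive semidefiniteness. -/
def IsCP {ι κ : Type} [Fintype ι] [Fintype κ] (Φ : Matrix ι ι ℂ → Matrix κ κ ℂ) : Prop :=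
  ∀ (n : ℕ) (M : Matrix (Fin n × ι) (Fin n × ι) ℂ), M.PosSemidef →
    (rightExt Φ M).PosSemidef

/-- Trace preserving. -/
def IsTP {ι κ : Type} [Fintype ι] [Fintype κ] (Φ : Matrix ι ι ℂ → Matrix κ κ ℂ) : Prop :=
  ∀ M, (Φ M).trace = M.trace

/-- Trace nonincreasing on positive semidefinite inputs. -/
def IsTNI {ι κ : Type} [Fintype ι] [Fintype κ] (Φ : Matrix ι ι ℂ → Matrix κ κ ℂ) : Prop :=
  ∀ M : Matrix ι ι ℂ, M.PosSemidef → ((Φ M).trace).re ≤ (M.trace).re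

/-- A quantum channel: linear, completely positive and trace preserving. -/
def IsChannel {ι κ : Type} [Fintype ι] [Fintype κ] (Φ : Matrix ι ι ℂ → Matrix κ κ ℂ) : Prop :=
  IsLinearMap ℂ Φ ∧ IsCP Φ ∧ IsTP Φ


/-- Marginal of a state on `T^{⊗m}` on its first `j` tensor factors. -/
noncomputable def margFirst {T : Type} [Fintype T] [DecidableEq T] {m : ℕ}
    (η : Matrix (Fin m → T) (Fin m → T) ℂ) (j : ℕ) (hj : j ≤ m) :
    Matrix (Fin j → T) (Fin j → T) ℂ :=
  fun a b => ∑ x : Fin m → T,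
    if (fun t : Fin j => x (Fin.castLE hj t)) = a
    then η x (fun s : Fin m => if h : (s : ℕ) < j then b ⟨s, h⟩ else x s) else 0

/-- The state
`ν₂ = (1/g)[ ∑_{i=1}^{g−m} ζ^{⊗(i−1)} ⊗ η ⊗ θ^{⊗(g−m−i+1)} ⊗ |i⟩⟨i|
            + ∑_{i=g−m+1}^{g} ζ^{⊗(i−1)} ⊗ η_{1:g−i+1} ⊗ |i⟩⟨i| ]` on `T^{⊗g} ⊗ ℂ^g`. -/
noncomputable def nu2g {T : Type} [Fintype T] [DecidableEq T] (g : ℕ) {m : ℕ}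
    (ζ θ : Matrix T T ℂ) (η : Matrix (Fin m → T) (Fin m → T) ℂ) :
    Matrix ((Fin g → T) × Fin g) ((Fin g → T) × Fin g) ℂ :=
  fun p q =>
    if p.2 = q.2 then
      (1 / (g : ℂ)) *
        (∏ t : Fin g, if (t : ℕ) < (p.2 : ℕ) then ζ (p.1 t) (q.1 t) else 1) *
        (if h : (p.2 : ℕ) < g - m then
          η (fun t : Fin m => p.1 ⟨(p.2 : ℕ) + (t : ℕ), by have := t.isLt; omega⟩)
            (fun t : Fin m => q.1 ⟨(p.2 : ℕ) + (t : ℕ), by have := t.isLt; omega⟩) *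
            ∏ t : Fin g, if (p.2 : ℕ) + m ≤ (t : ℕ) then θ (p.1 t) (q.1 t) else 1
        else
          margFirst η (g - (p.2 : ℕ)) (by have := p.2.isLt; omega)
            (fun t => p.1 ⟨(p.2 : ℕ) + (t : ℕ), by have := t.isLt; have := p.2.isLt; omega⟩)
            (fun t => q.1 ⟨(p.2 : ℕ) + (t : ℕ), by have := t.isLt; have := p.2.isLt; omega⟩))
    else 0

/-- The catalyst
`ω = (1/g)[ ∑_{i=1}^{g−m−1} ζ^{⊗(i−1)} ⊗ η ⊗ θ^{⊗(g−m−i)} ⊗ |i⟩⟨i|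
           + ∑_{i=g−m}^{g} ζ^{⊗(i−1)} ⊗ η_{1:g−i} ⊗ |i⟩⟨i| ]` on `T^{⊗(g−1)} ⊗ ℂ^g`. -/
noncomputable def omegag {T : Type} [Fintype T] [DecidableEq T] (g : ℕ) {m : ℕ}
    (ζ θ : Matrix T T ℂ) (η : Matrix (Fin m → T) (Fin m → T) ℂ) :
    Matrix ((Fin (g - 1) → T) × Fin g) ((Fin (g - 1) → T) × Fin g) ℂ :=
  fun p q =>
    if p.2 = q.2 then
      (1 / (g : ℂ)) *
        (∏ t : Fin (g - 1), if (t : ℕ) < (p.2 : ℕ) then ζ (p.1 t) (q.1 t) else 1) *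
        (if h : (p.2 : ℕ) < g - m - 1 then
          η (fun t : Fin m => p.1 ⟨(p.2 : ℕ) + (t : ℕ), by have := t.isLt; omega⟩)
            (fun t : Fin m => q.1 ⟨(p.2 : ℕ) + (t : ℕ), by have := t.isLt; omega⟩) *
            ∏ t : Fin (g - 1), if (p.2 : ℕ) + m ≤ (t : ℕ) then θ (p.1 t) (q.1 t) else 1
        else
          margFirst η (g - 1 - (p.2 : ℕ)) (by have := p.2.isLt; omega)
            (fun t => p.1 ⟨(p.2 : ℕ) + (t : ℕ), by have := t.isLt; have := p.2.isLt; omega⟩)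
            (fun t => q.1 ⟨(p.2 : ℕ) + (t : ℕ), by have := t.isLt; have := p.2.isLt; omega⟩))
    else 0

/-- Partial trace over the last `T`-tensor factor of a state on `T^{⊗g} ⊗ ℂ^r`. -/
noncomputable def ptraceLastBlock {T : Type} [Fintype T] {g r : ℕ}
    (M : Matrix ((Fin g → T) × Fin r) ((Fin g → T) × Fin r) ℂ) :
    Matrix ((Fin (g - 1) → T) × Fin r) ((Fin (g - 1) → T) × Fin r) ℂ :=
  fun p q => ∑ t : T,
    M ((fun s : Fin g => if h : (s : ℕ) < g - 1 then p.1 ⟨s, h⟩ else t), p.2)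
      ((fun s : Fin g => if h : (s : ℕ) < g - 1 then q.1 ⟨s, h⟩ else t), q.2)

/-- Partial trace over the first `g−1` `T`-tensor factors and the classical register. -/
noncomputable def ptraceAllButLast {T : Type} [Fintype T] [DecidableEq T] {g r : ℕ}
    (M : Matrix ((Fin g → T) × Fin r) ((Fin g → T) × Fin r) ℂ) :
    Matrix T T ℂ :=
  fun a b => ∑ c : Fin r, ∑ z : Fin (g - 1) → T,
    M ((fun s : Fin g => if h : (s : ℕ) < g - 1 then z ⟨s, h⟩ else a), c)
      ((fun s : Fin g => if h : (s : ℕ) < g - 1 then z ⟨s, h⟩ else b), c)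

/-- Marginal of a multipartite state on the `i`-th tensor factor. -/
noncomputable def marginalAt {T : Type} [Fintype T] [DecidableEq T] {m : ℕ}
    (η : Matrix (Fin m → T) (Fin m → T) ℂ) (i : Fin m) : Matrix T T ℂ :=
  fun a b => ∑ x : Fin m → T, if x i = a then η x (Function.update x i b) else 0


section Aux

variable {T : Type} [Fintype T] [DecidableEq T] {m : ℕ}

lemma trace_marginalAt (η : Matrix (Fin m → T) (Fin m → T) ℂ) (i : Fin m) :
    (marginalAt η i).trace = η.trace := by
  unfold marginalAt Matrix.trace Matrix.diag
  rw [Finset.sum_comm]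
  refine Finset.sum_congr rfl fun x _ => ?_
  simp [Finset.sum_ite_eq, Function.update_eq_self]

lemma partc {g : ℕ} (hm : 1 ≤ m)
    (θ : Matrix T T ℂ)
    (η : Matrix (Fin m → T) (Fin m → T) ℂ)
    (PV QW : Matrix T T ℂ)
    (hPV : PV.IsHermitian) (hQW : QW.IsHermitian)
    (hPQ : PV * QW = 0)
    (hsup : ∀ i : Fin m, PV * marginalAt η i * PV = marginalAt η i)
    (hθsup : QW * θ * QW = θ) :
    PV * (((m : ℂ) / g) • ((1 / (m : ℂ)) • ∑ i : Fin m, marginalAt η i) +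
          (1 - (m : ℂ) / g) • θ) * PV =
        ((m : ℂ) / g) • ((1 / (m : ℂ)) • ∑ i : Fin m, marginalAt η i) := by
  have hQP : QW * PV = 0 := by
    have h := congrArg Matrix.conjTranspose hPQ
    simpa [Matrix.conjTranspose_mul, hPV.eq, hQW.eq] using h
  have hθ0 : PV * θ * PV = 0 := by
    rw [← hθsup]
    have : PV * (QW * θ * QW) * PV = PV * QW * (θ * QW * PV) := by
      noncomm_ring
    rw [this, hPQ]
    simp
  have hsum : PV * (∑ i : Fin m, marginalAt η i) * PV = ∑ i : Fin m, marginalAt η i := by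
    rw [Finset.mul_sum, Finset.sum_mul]
    exact Finset.sum_congr rfl fun i _ => hsup i
  rw [Matrix.mul_add, Matrix.add_mul]
  rw [Matrix.mul_smul, Matrix.smul_mul, Matrix.mul_smul, Matrix.smul_mul]
  rw [Matrix.mul_smul, Matrix.smul_mul]
  rw [hsum, hθ0]
  simp

lemma margFirst_self (η : Matrix (Fin m → T) (Fin m → T) ℂ)
    {j : ℕ} (hjm : j = m) (hj : j ≤ m) (a b : Fin j → T) :
    margFirst η j hj a b
      = η (fun t => a (Fin.cast hjm.symm t)) (fun t => b (Fin.cast hjm.symm t)) := by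
  subst hjm
  unfold margFirst
  have h1 : (fun t : Fin j => a (Fin.cast rfl t)) = a := by funext t; rfl
  have h2 : (fun t : Fin j => b (Fin.cast rfl t)) = b := by funext t; rfl
  rw [h1, h2]
  have key : ∀ x : Fin j → T, (fun t : Fin j => x (Fin.castLE hj t)) = x := by
    intro x; funext t; exact congrArg x (Fin.ext rfl)
  have key2 : ∀ x : Fin j → T,
      (fun s : Fin j => if h : (s : ℕ) < j then b ⟨s, h⟩ else x s) = b := by
    intro x; funext s
    exact (dif_pos s.isLt).trans (congrArg b (Fin.ext rfl))
  calc (∑ x : Fin j → T,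
      if (fun t : Fin j => x (Fin.castLE hj t)) = a
      then η x (fun s : Fin j => if h : (s : ℕ) < j then b ⟨s, h⟩ else x s) else 0)
      = ∑ x : Fin j → T, if x = a then η x b else 0 := by
        refine Finset.sum_congr rfl fun x _ => ?_
        rw [key x, key2 x]
    _ = η a b := by simp [Finset.sum_ite_eq]

lemma margFirst_reduce (η : Matrix (Fin m → T) (Fin m → T) ℂ)
    {j j' : ℕ} (hjj : j = j' + 1) (hj : j ≤ m) (hj' : j' ≤ m)
    (a b : Fin j' → T) :
    (∑ t : T, margFirst η j hj
        (fun s => if h2 : (s : ℕ) < j' then a ⟨s, h2⟩ else t)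
        (fun s => if h2 : (s : ℕ) < j' then b ⟨s, h2⟩ else t))
      = margFirst η j' hj' a b := by
  subst hjj
  have hlt : j' < m := by omega
  unfold margFirst
  rw [Finset.sum_comm]
  refine Finset.sum_congr rfl fun x _ => ?_
  have key : ∀ t : T,
      ((fun u : Fin (j' + 1) => x (Fin.castLE hj u)) =
        fun s : Fin (j' + 1) => if h2 : (s : ℕ) < j' then a ⟨s, h2⟩ else t)
      ↔ (((fun u : Fin j' => x (Fin.castLE hj' u)) = a) ∧ t = x ⟨j', hlt⟩) := by
    intro t
    constructor
    · intro h
      refine ⟨funext fun u => ?_, ?_⟩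
      · have h1 := (congrFun h ⟨(u : ℕ), by omega⟩).trans (dif_pos u.isLt)
        exact (congrArg x (Fin.ext rfl)).trans h1
      · have h1 := (congrFun h ⟨j', by omega⟩).trans (dif_neg (Nat.lt_irrefl j'))
        exact h1.symm.trans (congrArg x (Fin.ext rfl))
    · rintro ⟨h1, h2⟩
      funext u
      by_cases hu : (u : ℕ) < j'
      · refine Eq.trans ?_ (dif_pos hu).symm
        exact (congrArg x (Fin.ext rfl)).trans (congrFun h1 ⟨(u : ℕ), hu⟩)
      · refine Eq.trans ?_ (dif_neg hu).symm
        refine Eq.trans (congrArg x (Fin.ext ?_)) h2.symm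
        show (u : ℕ) = j'
        have := u.isLt; omega
  have step1 : ∀ t : T,
      (if (fun u : Fin (j' + 1) => x (Fin.castLE hj u)) =
          (fun s : Fin (j' + 1) => if h2 : (s : ℕ) < j' then a ⟨s, h2⟩ else t)
        then η x (fun s : Fin m => if h : (s : ℕ) < j' + 1 then
            (fun s' : Fin (j'+1) => if h2 : (s' : ℕ) < j' then b ⟨s', h2⟩ else t) ⟨s, h⟩ else x s)
        else 0)
      = if t = x ⟨j', hlt⟩ then
          (if (fun u : Fin j' => x (Fin.castLE hj' u)) = a
            then η x (fun s : Fin m => if h : (s : ℕ) < j' + 1 then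
              (fun s' : Fin (j'+1) => if h2 : (s' : ℕ) < j' then b ⟨s', h2⟩ else t) ⟨s, h⟩ else x s)
            else 0)
          else 0 := by
    intro t
    rw [if_congr (key t) rfl rfl]
    by_cases h1 : (fun u : Fin j' => x (Fin.castLE hj' u)) = a <;>
      by_cases h2 : t = x ⟨j', hlt⟩ <;> simp [h1, h2]
  rw [Finset.sum_congr rfl fun t _ => step1 t, Finset.sum_ite_eq' Finset.univ]
  rw [if_pos (Finset.mem_univ _)]
  refine if_congr Iff.rfl (congrArg _ (funext fun s => ?_)) rfl
  by_cases hs : (s : ℕ) < j' + 1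
  · by_cases hs' : (s : ℕ) < j'
    · refine (dif_pos hs).trans ((dif_pos hs').trans ?_)
      exact (dif_pos hs' :
        (if h : (s : ℕ) < j' then b ⟨(s : ℕ), h⟩ else x s) = b ⟨(s : ℕ), hs'⟩).symm
    · refine (dif_pos hs).trans (Eq.trans ?_ (dif_neg hs').symm)
      refine (dif_neg hs').trans (congrArg x (Fin.ext ?_))
      show j' = (s : ℕ); omega
  · refine (dif_neg hs).trans ?_
    exact (dif_neg (show ¬(s : ℕ) < j' by omega) :
      (if h : (s : ℕ) < j' then b ⟨(s : ℕ), h⟩ else x s) = x s).symm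

lemma margFirst_sum_off (η : Matrix (Fin m → T) (Fin m → T) ℂ)
    {j j' : ℕ} (hjj : j = j' + 1) (hj : j ≤ m) (hj' : j' < m)
    (a b : T) :
    (∑ w : Fin j' → T, margFirst η j hj
        (fun s => if h2 : (s : ℕ) < j' then w ⟨s, h2⟩ else a)
        (fun s => if h2 : (s : ℕ) < j' then w ⟨s, h2⟩ else b))
      = marginalAt η ⟨j', hj'⟩ a b := by
  subst hjj
  have hle : j' ≤ m := le_of_lt hj'
  unfold margFirst marginalAt
  rw [Finset.sum_comm]
  refine Finset.sum_congr rfl fun x _ => ?_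
  have key : ∀ w : Fin j' → T,
      ((fun u : Fin (j' + 1) => x (Fin.castLE hj u)) =
        fun s : Fin (j' + 1) => if h2 : (s : ℕ) < j' then w ⟨s, h2⟩ else a)
      ↔ ((w = fun u : Fin j' => x (Fin.castLE hle u)) ∧ x ⟨j', hj'⟩ = a) := by
    intro w
    constructor
    · intro h
      refine ⟨funext fun u => ?_, ?_⟩
      · have h1 := (congrFun h ⟨(u : ℕ), by omega⟩).trans (dif_pos u.isLt)
        exact (h1.symm.trans (congrArg x (Fin.ext rfl))).symm.symm
      · have h1 := (congrFun h ⟨j', by omega⟩).trans (dif_neg (Nat.lt_irrefl j'))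
        exact ((congrArg x (Fin.ext rfl)).symm.trans h1).symm.symm
    · rintro ⟨h1, h2⟩
      funext u
      by_cases hu : (u : ℕ) < j'
      · refine Eq.trans ?_ (dif_pos hu).symm
        exact (congrArg x (Fin.ext rfl)).trans (congrFun h1 ⟨(u : ℕ), hu⟩).symm
      · refine Eq.trans ?_ (dif_neg hu).symm
        refine Eq.trans (congrArg x (Fin.ext ?_)) h2
        show (u : ℕ) = j'
        have := u.isLt; omega
  have step1 : ∀ w : Fin j' → T,
      (if (fun u : Fin (j' + 1) => x (Fin.castLE hj u)) =
          (fun s : Fin (j' + 1) => if h2 : (s : ℕ) < j' then w ⟨s, h2⟩ else a)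
        then η x (fun s : Fin m => if h : (s : ℕ) < j' + 1 then
            (fun s' : Fin (j'+1) => if h2 : (s' : ℕ) < j' then w ⟨s', h2⟩ else b) ⟨s, h⟩ else x s)
        else 0)
      = if w = (fun u : Fin j' => x (Fin.castLE hle u)) then
          (if x ⟨j', hj'⟩ = a
            then η x (fun s : Fin m => if h : (s : ℕ) < j' + 1 then
              (fun s' : Fin (j'+1) => if h2 : (s' : ℕ) < j' then w ⟨s', h2⟩ else b) ⟨s, h⟩ else x s)
            else 0)
          else 0 := by
    intro w
    rw [if_congr (key w) rfl rfl]
    by_cases h1 : w = (fun u : Fin j' => x (Fin.castLE hle u)) <;>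
      by_cases h2 : x ⟨j', hj'⟩ = a <;> simp [h1, h2]
  rw [Finset.sum_congr rfl fun w _ => step1 w, Finset.sum_ite_eq' Finset.univ]
  rw [if_pos (Finset.mem_univ _)]
  refine if_congr Iff.rfl (congrArg _ (funext fun s => ?_)) rfl
  by_cases hs : (s : ℕ) < j' + 1
  · by_cases hs' : (s : ℕ) < j'
    · have hne : s ≠ (⟨j', hj'⟩ : Fin m) := fun hc => by
        have hv : (s : ℕ) = j' := congrArg Fin.val hc
        omega
      refine (dif_pos hs).trans ?_
      refine ((dif_pos hs').trans (congrArg x (Fin.ext rfl))).trans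
        (Function.update_of_ne hne b x).symm
    · have hsj : s = (⟨j', hj'⟩ : Fin m) := Fin.ext (by show (s : ℕ) = j'; omega)
      refine (dif_pos hs).trans ?_
      refine (dif_neg hs').trans ?_
      rw [hsj, Function.update_self]
  · have hne : s ≠ (⟨j', hj'⟩ : Fin m) := fun hc => by
      have hv : (s : ℕ) = j' := congrArg Fin.val hc
      omega
    exact (dif_neg hs).trans (Function.update_of_ne hne b x).symm

lemma prod_fin_last {g : ℕ} (hg : 1 ≤ g) (F : Fin g → ℂ) :
    ∏ s, F s = (∏ s : Fin (g - 1), F ⟨s, by omega⟩) * F ⟨g - 1, by omega⟩ := by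
  obtain ⟨G, rfl⟩ : ∃ G, g = G + 1 := ⟨g - 1, by omega⟩
  rw [Fin.prod_univ_castSucc]
  exact congrArg₂ HMul.hMul
    (Finset.prod_congr rfl fun s _ => congrArg F (Fin.ext rfl))
    (congrArg F (Fin.ext rfl))

lemma parta {g : ℕ} (hm : 1 ≤ m) (hmg : m ≤ g)
    (ζ θ : Matrix T T ℂ) (hθtr : θ.trace = 1)
    (η : Matrix (Fin m → T) (Fin m → T) ℂ) :
    ptraceLastBlock (nu2g g ζ θ η) = omegag g ζ θ η := by
  have hg : 1 ≤ g := le_trans hm hmg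
  funext p q
  have hp2 := p.2.isLt
  have htr : (∑ t : T, θ t t) = 1 := by simpa [Matrix.trace, Matrix.diag] using hθtr
  by_cases hpq : p.2 = q.2
  · unfold ptraceLastBlock nu2g omegag
    rw [if_pos hpq]
    rw [Finset.sum_congr rfl fun t (_ : t ∈ Finset.univ) => if_pos hpq]
    have hZ : ∀ t : T,
        (∏ s : Fin g, if (s : ℕ) < (p.2 : ℕ) then
          ζ (if h : (s : ℕ) < g - 1 then p.1 ⟨s, h⟩ else t)
            (if h : (s : ℕ) < g - 1 then q.1 ⟨s, h⟩ else t) else 1)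
        = ∏ s : Fin (g - 1), if (s : ℕ) < (p.2 : ℕ) then ζ (p.1 s) (q.1 s) else 1 := by
      intro t
      rw [prod_fin_last hg]
      have hlast : (if ((⟨g - 1, by omega⟩ : Fin g) : ℕ) < (p.2 : ℕ) then
          ζ (if h : ((⟨g - 1, by omega⟩ : Fin g) : ℕ) < g - 1 then p.1 ⟨_, h⟩ else t)
            (if h : ((⟨g - 1, by omega⟩ : Fin g) : ℕ) < g - 1 then q.1 ⟨_, h⟩ else t) else 1)
          = 1 := if_neg (by show ¬(g - 1 < (p.2 : ℕ)); omega)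
      rw [hlast, mul_one]
      refine Finset.prod_congr rfl fun s _ => ?_
      by_cases hsi : (s : ℕ) < (p.2 : ℕ)
      · refine (if_pos hsi).trans (Eq.trans ?_ (if_pos hsi).symm)
        exact congrArg₂ ζ ((dif_pos s.isLt).trans (congrArg p.1 (Fin.ext rfl)))
          ((dif_pos s.isLt).trans (congrArg q.1 (Fin.ext rfl)))
      · exact (if_neg hsi).trans (if_neg hsi).symm
    by_cases hc : (p.2 : ℕ) < g - m
    · -- first branch of nu2g
      have hE : ∀ t : T,
          ((fun t1 : Fin m => if h2 : ((p.2 : ℕ) + (t1 : ℕ)) < g - 1 then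
              p.1 ⟨(p.2 : ℕ) + (t1 : ℕ), h2⟩ else t)
            = fun t1 : Fin m => p.1 ⟨(p.2 : ℕ) + (t1 : ℕ), by have := t1.isLt; omega⟩)
          ∧ ((fun t1 : Fin m => if h2 : ((p.2 : ℕ) + (t1 : ℕ)) < g - 1 then
              q.1 ⟨(p.2 : ℕ) + (t1 : ℕ), h2⟩ else t)
            = fun t1 : Fin m => q.1 ⟨(p.2 : ℕ) + (t1 : ℕ), by have := t1.isLt; omega⟩) := by
        intro t
        constructor
        · exact funext fun t1 => dif_pos (by have := t1.isLt; omega)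
        · exact funext fun t1 => dif_pos (by have := t1.isLt; omega)
      have hP : ∀ t : T,
          (∏ s : Fin g, if (p.2 : ℕ) + m ≤ (s : ℕ) then
            θ (if h2 : (s : ℕ) < g - 1 then p.1 ⟨s, h2⟩ else t)
              (if h2 : (s : ℕ) < g - 1 then q.1 ⟨s, h2⟩ else t) else 1)
          = (∏ s : Fin (g - 1), if (p.2 : ℕ) + m ≤ (s : ℕ) then θ (p.1 s) (q.1 s) else 1)
              * θ t t := by
        intro t
        rw [prod_fin_last hg]
        congr 1
        · refine Finset.prod_congr rfl fun s _ => ?_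
          by_cases hs : (p.2 : ℕ) + m ≤ (s : ℕ)
          · refine (if_pos hs).trans (Eq.trans ?_ (if_pos hs).symm)
            exact congrArg₂ θ ((dif_pos s.isLt).trans (congrArg p.1 (Fin.ext rfl)))
              ((dif_pos s.isLt).trans (congrArg q.1 (Fin.ext rfl)))
          · exact (if_neg hs).trans (if_neg hs).symm
        · refine (if_pos (show (p.2 : ℕ) + m ≤ g - 1 by omega)).trans ?_
          exact congrArg₂ θ (dif_neg (Nat.lt_irrefl (g - 1))) (dif_neg (Nat.lt_irrefl (g - 1)))
      have hsum : ∀ t : T,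
          ((1 / (g : ℂ) * ∏ s : Fin g, if (s : ℕ) < (p.2 : ℕ) then
            ζ (if h : (s : ℕ) < g - 1 then p.1 ⟨s, h⟩ else t)
              (if h : (s : ℕ) < g - 1 then q.1 ⟨s, h⟩ else t) else 1) *
          (if h : (p.2 : ℕ) < g - m then
            η (fun t1 : Fin m => if h2 : ((p.2 : ℕ) + (t1 : ℕ)) < g - 1 then
                p.1 ⟨(p.2 : ℕ) + (t1 : ℕ), h2⟩ else t)
              (fun t1 : Fin m => if h2 : ((p.2 : ℕ) + (t1 : ℕ)) < g - 1 then
                q.1 ⟨(p.2 : ℕ) + (t1 : ℕ), h2⟩ else t) *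
              ∏ s : Fin g, if (p.2 : ℕ) + m ≤ (s : ℕ) then
                θ (if h2 : (s : ℕ) < g - 1 then p.1 ⟨s, h2⟩ else t)
                  (if h2 : (s : ℕ) < g - 1 then q.1 ⟨s, h2⟩ else t) else 1
          else
            margFirst η (g - (p.2 : ℕ)) (by omega)
              (fun t1 : Fin (g - (p.2 : ℕ)) => if h2 : ((p.2 : ℕ) + (t1 : ℕ)) < g - 1 then
                p.1 ⟨(p.2 : ℕ) + (t1 : ℕ), h2⟩ else t)
              (fun t1 : Fin (g - (p.2 : ℕ)) => if h2 : ((p.2 : ℕ) + (t1 : ℕ)) < g - 1 then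
                q.1 ⟨(p.2 : ℕ) + (t1 : ℕ), h2⟩ else t)))
          = ((1 / (g : ℂ) * ∏ s : Fin (g - 1), if (s : ℕ) < (p.2 : ℕ) then ζ (p.1 s) (q.1 s) else 1) *
              (η (fun t1 : Fin m => p.1 ⟨(p.2 : ℕ) + (t1 : ℕ), by have := t1.isLt; omega⟩)
                  (fun t1 : Fin m => q.1 ⟨(p.2 : ℕ) + (t1 : ℕ), by have := t1.isLt; omega⟩) *
                (∏ s : Fin (g - 1), if (p.2 : ℕ) + m ≤ (s : ℕ) then θ (p.1 s) (q.1 s) else 1)))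
            * θ t t := by
        intro t
        rw [dif_pos hc, hZ t, (hE t).1, (hE t).2, hP t]
        ring
      refine (Finset.sum_congr rfl fun t _ => hsum t).trans ?_
      rw [← Finset.mul_sum, htr, mul_one]
      by_cases hc2 : (p.2 : ℕ) < g - m - 1
      · rw [dif_pos hc2]
      · rw [dif_neg hc2]
        rw [margFirst_self η (show g - 1 - (p.2 : ℕ) = m by omega)]
        have hθ1 : (∏ s : Fin (g - 1), if (p.2 : ℕ) + m ≤ (s : ℕ) then θ (p.1 s) (q.1 s) else 1)
            = 1 := Finset.prod_eq_one fun s _ => if_neg (by have := s.isLt; omega)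
        rw [hθ1, mul_one]
        refine congrArg (HMul.hMul _) ?_
        exact congrArg₂ η (funext fun u => congrArg p.1 (Fin.ext rfl))
          (funext fun u => congrArg q.1 (Fin.ext rfl))
    · -- second branch of nu2g
      have hsum : ∀ t : T,
          ((1 / (g : ℂ) * ∏ s : Fin g, if (s : ℕ) < (p.2 : ℕ) then
            ζ (if h : (s : ℕ) < g - 1 then p.1 ⟨s, h⟩ else t)
              (if h : (s : ℕ) < g - 1 then q.1 ⟨s, h⟩ else t) else 1) *
          (if h : (p.2 : ℕ) < g - m then
            η (fun t1 : Fin m => if h2 : ((p.2 : ℕ) + (t1 : ℕ)) < g - 1 then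
                p.1 ⟨(p.2 : ℕ) + (t1 : ℕ), h2⟩ else t)
              (fun t1 : Fin m => if h2 : ((p.2 : ℕ) + (t1 : ℕ)) < g - 1 then
                q.1 ⟨(p.2 : ℕ) + (t1 : ℕ), h2⟩ else t) *
              ∏ s : Fin g, if (p.2 : ℕ) + m ≤ (s : ℕ) then
                θ (if h2 : (s : ℕ) < g - 1 then p.1 ⟨s, h2⟩ else t)
                  (if h2 : (s : ℕ) < g - 1 then q.1 ⟨s, h2⟩ else t) else 1
          else
            margFirst η (g - (p.2 : ℕ)) (by omega)
              (fun t1 : Fin (g - (p.2 : ℕ)) => if h2 : ((p.2 : ℕ) + (t1 : ℕ)) < g - 1 then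
                p.1 ⟨(p.2 : ℕ) + (t1 : ℕ), h2⟩ else t)
              (fun t1 : Fin (g - (p.2 : ℕ)) => if h2 : ((p.2 : ℕ) + (t1 : ℕ)) < g - 1 then
                q.1 ⟨(p.2 : ℕ) + (t1 : ℕ), h2⟩ else t)))
          = (1 / (g : ℂ) * ∏ s : Fin (g - 1), if (s : ℕ) < (p.2 : ℕ) then ζ (p.1 s) (q.1 s) else 1) *
              margFirst η (g - (p.2 : ℕ)) (by omega)
                (fun s : Fin (g - (p.2 : ℕ)) => if h2 : (s : ℕ) < g - 1 - (p.2 : ℕ) then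
                  (fun u : Fin (g - 1 - (p.2 : ℕ)) =>
                    p.1 ⟨(p.2 : ℕ) + (u : ℕ), by have := u.isLt; omega⟩) ⟨s, h2⟩ else t)
                (fun s : Fin (g - (p.2 : ℕ)) => if h2 : (s : ℕ) < g - 1 - (p.2 : ℕ) then
                  (fun u : Fin (g - 1 - (p.2 : ℕ)) =>
                    q.1 ⟨(p.2 : ℕ) + (u : ℕ), by have := u.isLt; omega⟩) ⟨s, h2⟩ else t) := by
        intro t
        rw [dif_neg hc, hZ t]
        refine congrArg (HMul.hMul _) (congrArg₂ (margFirst η (g - (p.2 : ℕ)) (by omega))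
          (funext fun s => ?_) (funext fun s => ?_))
        · by_cases h2 : (s : ℕ) < g - 1 - (p.2 : ℕ)
          · refine (dif_pos (by omega)).trans (Eq.trans ?_ (dif_pos h2).symm)
            exact congrArg p.1 (Fin.ext rfl)
          · refine (dif_neg (by omega)).trans ?_
            exact (dif_neg h2 : (if h2' : (s : ℕ) < g - 1 - (p.2 : ℕ) then
              (fun u : Fin (g - 1 - (p.2 : ℕ)) =>
                p.1 ⟨(p.2 : ℕ) + (u : ℕ), by have := u.isLt; omega⟩) ⟨s, h2'⟩ else t) = t).symm
        · by_cases h2 : (s : ℕ) < g - 1 - (p.2 : ℕ)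
          · refine (dif_pos (by omega)).trans (Eq.trans ?_ (dif_pos h2).symm)
            exact congrArg q.1 (Fin.ext rfl)
          · refine (dif_neg (by omega)).trans ?_
            exact (dif_neg h2 : (if h2' : (s : ℕ) < g - 1 - (p.2 : ℕ) then
              (fun u : Fin (g - 1 - (p.2 : ℕ)) =>
                q.1 ⟨(p.2 : ℕ) + (u : ℕ), by have := u.isLt; omega⟩) ⟨s, h2'⟩ else t) = t).symm
      refine (Finset.sum_congr rfl fun t _ => hsum t).trans ?_
      rw [← Finset.mul_sum,
        margFirst_reduce η (show g - (p.2 : ℕ) = (g - 1 - (p.2 : ℕ)) + 1 by omega)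
          (by omega) (by omega)
          (fun u : Fin (g - 1 - (p.2 : ℕ)) =>
            p.1 ⟨(p.2 : ℕ) + (u : ℕ), by have := u.isLt; omega⟩)
          (fun u : Fin (g - 1 - (p.2 : ℕ)) =>
            q.1 ⟨(p.2 : ℕ) + (u : ℕ), by have := u.isLt; omega⟩)]
      rw [dif_neg (show ¬(p.2 : ℕ) < g - m - 1 by omega)]
  · unfold ptraceLastBlock nu2g omegag
    rw [if_neg hpq]
    rw [Finset.sum_congr rfl fun t (_ : t ∈ Finset.univ) => if_neg hpq]
    simp

lemma sum_window {n mw : ℕ} (e : Fin mw → Fin n) (he : Function.Injective e)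
    (f : Fin n → T → ℂ) (hfe : ∀ j t, f (e j) t = 1)
    (hout : ∀ s : Fin n, (∀ j, e j ≠ s) → (∑ t : T, f s t) = 1)
    (G : (Fin mw → T) → ℂ) :
    (∑ z : Fin n → T, (∏ s, f s (z s)) * G (fun j => z (e j))) = ∑ w, G w := by
  have hG : ∀ z : Fin n → T, G (fun j => z (e j)) =
      ∑ w : Fin mw → T, (∏ j, if z (e j) = w j then (1 : ℂ) else 0) * G w := by
    intro z
    have h1 : ∀ w : Fin mw → T, (∏ j, if z (e j) = w j then (1 : ℂ) else 0)
        = if w = (fun j => z (e j)) then 1 else 0 := by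
      intro w
      by_cases hw : w = fun j => z (e j)
      · subst hw; simp
      · rw [if_neg hw]
        obtain ⟨j0, hj0⟩ : ∃ j, ¬z (e j) = w j := by
          by_contra hcon; push_neg at hcon
          exact hw (funext fun j => (hcon j).symm)
        exact Finset.prod_eq_zero (Finset.mem_univ j0) (if_neg hj0)
    calc G (fun j => z (e j))
        = ∑ w : Fin mw → T, if w = (fun j => z (e j)) then G w else 0 := by
          rw [Finset.sum_ite_eq' Finset.univ (fun j => z (e j)) G,
            if_pos (Finset.mem_univ _)]
      _ = ∑ w : Fin mw → T, (∏ j, if z (e j) = w j then (1 : ℂ) else 0) * G w := by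
          refine Finset.sum_congr rfl fun w _ => ?_
          rw [h1 w]
          by_cases hw : w = fun j => z (e j) <;> simp [hw]
  calc (∑ z : Fin n → T, (∏ s, f s (z s)) * G (fun j => z (e j)))
      = ∑ z : Fin n → T, ∑ w : Fin mw → T,
          ((∏ s, f s (z s)) * (∏ j, if z (e j) = w j then (1 : ℂ) else 0)) * G w := by
        refine Finset.sum_congr rfl fun z _ => ?_
        rw [hG z, Finset.mul_sum]
        refine Finset.sum_congr rfl fun w _ => by ring
    _ = ∑ w : Fin mw → T,
          (∑ z : Fin n → T, (∏ s, f s (z s)) * (∏ j, if z (e j) = w j then (1 : ℂ) else 0))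
            * G w := by
        rw [Finset.sum_comm]
        refine Finset.sum_congr rfl fun w _ => ?_
        rw [Finset.sum_mul]
    _ = ∑ w, G w := ?_
  refine Finset.sum_congr rfl fun w _ => ?_
  have hD : ∀ z : Fin n → T, (∏ j, if z (e j) = w j then (1 : ℂ) else 0)
      = ∏ s, ∏ j, (if e j = s then (if z s = w j then (1 : ℂ) else 0) else 1) := by
    intro z
    rw [Finset.prod_comm]
    refine Finset.prod_congr rfl fun j _ => ?_
    rw [Finset.prod_ite_eq, if_pos (Finset.mem_univ _)]
  have hkey : (∑ z : Fin n → T, (∏ s, f s (z s)) * (∏ j, if z (e j) = w j then (1 : ℂ) else 0))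
      = ∏ s : Fin n, ∑ t : T, (f s t * ∏ j, (if e j = s then (if t = w j then (1 : ℂ) else 0) else 1)) := by
    rw [Finset.prod_univ_sum]
    rw [← Fintype.piFinset_univ]
    refine Finset.sum_congr rfl fun z _ => ?_
    rw [hD z, ← Finset.prod_mul_distrib]
  rw [hkey]
  have hone : ∀ s : Fin n,
      (∑ t : T, (f s t * ∏ j, (if e j = s then (if t = w j then (1 : ℂ) else 0) else 1))) = 1 := by
    intro s
    by_cases hsw : ∃ j, e j = s
    · obtain ⟨j0, hj0⟩ := hsw
      have hprod : ∀ t : T, (∏ j, (if e j = s then (if t = w j then (1 : ℂ) else 0) else 1))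
          = if t = w j0 then 1 else 0 := by
        intro t
        rw [Finset.prod_eq_single j0
          (fun j _ hj => if_neg fun hcon => hj (he (hcon.trans hj0.symm)))
          (fun h => absurd (Finset.mem_univ j0) h), if_pos hj0]
      calc (∑ t : T, (f s t * ∏ j, (if e j = s then (if t = w j then (1 : ℂ) else 0) else 1)))
          = ∑ t : T, if t = w j0 then f s t else 0 := by
            refine Finset.sum_congr rfl fun t _ => ?_
            rw [hprod t]
            by_cases ht : t = w j0 <;> simp [ht]
        _ = f s (w j0) := by
            rw [Finset.sum_ite_eq' Finset.univ (w j0) (f s), if_pos (Finset.mem_univ _)]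
        _ = 1 := by rw [← hj0, hfe]
    · push_neg at hsw
      calc (∑ t : T, (f s t * ∏ j, (if e j = s then (if t = w j then (1 : ℂ) else 0) else 1)))
          = ∑ t : T, f s t := by
            refine Finset.sum_congr rfl fun t _ => ?_
            rw [Finset.prod_eq_one fun j _ => if_neg (hsw j), mul_one]
        _ = 1 := hout s hsw
  rw [Finset.prod_congr rfl fun s _ => hone s, Finset.prod_const_one, one_mul]

lemma partb {g : ℕ} (hm : 1 ≤ m) (hmg : m ≤ g)
    (ζ θ : Matrix T T ℂ) (hζtr : ζ.trace = 1) (hθtr : θ.trace = 1)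
    (η : Matrix (Fin m → T) (Fin m → T) ℂ) (hηtr : η.trace = 1)
    (a b : T) :
    ptraceAllButLast (nu2g g ζ θ η) a b =
      (((m : ℂ) / g) • ((1 / (m : ℂ)) • ∑ i : Fin m, marginalAt η i) +
        (1 - (m : ℂ) / g) • θ) a b := by
  have hg : 1 ≤ g := le_trans hm hmg
  have htrζ : (∑ t : T, ζ t t) = 1 := by simpa [Matrix.trace, Matrix.diag] using hζtr
  have htrθ : (∑ t : T, θ t t) = 1 := by simpa [Matrix.trace, Matrix.diag] using hθtr
  have htrη : (∑ w : Fin m → T, η w w) = 1 := by simpa [Matrix.trace, Matrix.diag] using hηtr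
  unfold ptraceAllButLast nu2g
  have hc : ∀ c : Fin g,
      (∑ z : Fin (g - 1) → T,
        ((1 / (g : ℂ) * ∏ s : Fin g, if (s : ℕ) < (c : ℕ) then
          ζ (if h : (s : ℕ) < g - 1 then z ⟨s, h⟩ else a)
            (if h : (s : ℕ) < g - 1 then z ⟨s, h⟩ else b) else 1) *
        (if h : (c : ℕ) < g - m then
          η (fun t1 : Fin m => if h2 : ((c : ℕ) + (t1 : ℕ)) < g - 1 then
              z ⟨(c : ℕ) + (t1 : ℕ), h2⟩ else a)
            (fun t1 : Fin m => if h2 : ((c : ℕ) + (t1 : ℕ)) < g - 1 then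
              z ⟨(c : ℕ) + (t1 : ℕ), h2⟩ else b) *
            ∏ s : Fin g, if (c : ℕ) + m ≤ (s : ℕ) then
              θ (if h2 : (s : ℕ) < g - 1 then z ⟨s, h2⟩ else a)
                (if h2 : (s : ℕ) < g - 1 then z ⟨s, h2⟩ else b) else 1
        else
          margFirst η (g - (c : ℕ)) (by omega)
            (fun t1 : Fin (g - (c : ℕ)) => if h2 : ((c : ℕ) + (t1 : ℕ)) < g - 1 then
              z ⟨(c : ℕ) + (t1 : ℕ), h2⟩ else a)
            (fun t1 : Fin (g - (c : ℕ)) => if h2 : ((c : ℕ) + (t1 : ℕ)) < g - 1 then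
              z ⟨(c : ℕ) + (t1 : ℕ), h2⟩ else b))))
      = if h : (c : ℕ) < g - m then (1 / (g : ℂ)) * θ a b
        else (1 / (g : ℂ)) * marginalAt η ⟨g - 1 - (c : ℕ), by omega⟩ a b := by
    intro c
    have hc2 := c.isLt
    by_cases hcm : (c : ℕ) < g - m
    · -- window case with θ at the end
      have hstep : ∀ z : Fin (g - 1) → T,
          ((1 / (g : ℂ) * ∏ s : Fin g, if (s : ℕ) < (c : ℕ) then
            ζ (if h : (s : ℕ) < g - 1 then z ⟨s, h⟩ else a)
              (if h : (s : ℕ) < g - 1 then z ⟨s, h⟩ else b) else 1) *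
          (if h : (c : ℕ) < g - m then
            η (fun t1 : Fin m => if h2 : ((c : ℕ) + (t1 : ℕ)) < g - 1 then
                z ⟨(c : ℕ) + (t1 : ℕ), h2⟩ else a)
              (fun t1 : Fin m => if h2 : ((c : ℕ) + (t1 : ℕ)) < g - 1 then
                z ⟨(c : ℕ) + (t1 : ℕ), h2⟩ else b) *
              ∏ s : Fin g, if (c : ℕ) + m ≤ (s : ℕ) then
                θ (if h2 : (s : ℕ) < g - 1 then z ⟨s, h2⟩ else a)
                  (if h2 : (s : ℕ) < g - 1 then z ⟨s, h2⟩ else b) else 1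
          else
            margFirst η (g - (c : ℕ)) (by omega)
              (fun t1 : Fin (g - (c : ℕ)) => if h2 : ((c : ℕ) + (t1 : ℕ)) < g - 1 then
                z ⟨(c : ℕ) + (t1 : ℕ), h2⟩ else a)
              (fun t1 : Fin (g - (c : ℕ)) => if h2 : ((c : ℕ) + (t1 : ℕ)) < g - 1 then
                z ⟨(c : ℕ) + (t1 : ℕ), h2⟩ else b)))
          = (∏ s : Fin (g - 1),
              (if (s : ℕ) < (c : ℕ) then ζ (z s) (z s) else 1) *
              (if (c : ℕ) + m ≤ (s : ℕ) then θ (z s) (z s) else 1)) *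
            ((1 / (g : ℂ)) * θ a b *
              η (fun j : Fin m => z ⟨(c : ℕ) + (j : ℕ), by have := j.isLt; omega⟩)
                (fun j : Fin m => z ⟨(c : ℕ) + (j : ℕ), by have := j.isLt; omega⟩)) := by
        intro z
        rw [dif_pos hcm]
        have hZ : (∏ s : Fin g, if (s : ℕ) < (c : ℕ) then
            ζ (if h : (s : ℕ) < g - 1 then z ⟨s, h⟩ else a)
              (if h : (s : ℕ) < g - 1 then z ⟨s, h⟩ else b) else 1)
            = ∏ s : Fin (g - 1), if (s : ℕ) < (c : ℕ) then ζ (z s) (z s) else 1 := by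
          rw [prod_fin_last hg]
          have hlast : (if ((⟨g - 1, by omega⟩ : Fin g) : ℕ) < (c : ℕ) then
              ζ (if h : ((⟨g - 1, by omega⟩ : Fin g) : ℕ) < g - 1 then z ⟨_, h⟩ else a)
                (if h : ((⟨g - 1, by omega⟩ : Fin g) : ℕ) < g - 1 then z ⟨_, h⟩ else b) else 1)
              = 1 := if_neg (by show ¬(g - 1 < (c : ℕ)); omega)
          rw [hlast, mul_one]
          refine Finset.prod_congr rfl fun s _ => ?_
          by_cases hsc : (s : ℕ) < (c : ℕ)
          · refine (if_pos hsc).trans (Eq.trans ?_ (if_pos hsc).symm)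
            exact congrArg₂ ζ ((dif_pos s.isLt).trans (congrArg z (Fin.ext rfl)))
              ((dif_pos s.isLt).trans (congrArg z (Fin.ext rfl)))
          · exact (if_neg hsc).trans (if_neg hsc).symm
        have hθp : (∏ s : Fin g, if (c : ℕ) + m ≤ (s : ℕ) then
            θ (if h2 : (s : ℕ) < g - 1 then z ⟨s, h2⟩ else a)
              (if h2 : (s : ℕ) < g - 1 then z ⟨s, h2⟩ else b) else 1)
            = (∏ s : Fin (g - 1), if (c : ℕ) + m ≤ (s : ℕ) then θ (z s) (z s) else 1)
              * θ a b := by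
          rw [prod_fin_last hg]
          congr 1
          · refine Finset.prod_congr rfl fun s _ => ?_
            by_cases hs : (c : ℕ) + m ≤ (s : ℕ)
            · refine (if_pos hs).trans (Eq.trans ?_ (if_pos hs).symm)
              exact congrArg₂ θ ((dif_pos s.isLt).trans (congrArg z (Fin.ext rfl)))
                ((dif_pos s.isLt).trans (congrArg z (Fin.ext rfl)))
            · exact (if_neg hs).trans (if_neg hs).symm
          · refine (if_pos (show (c : ℕ) + m ≤ g - 1 by omega)).trans ?_
            exact congrArg₂ θ (dif_neg (Nat.lt_irrefl (g - 1))) (dif_neg (Nat.lt_irrefl (g - 1)))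
        have hwa : (fun t1 : Fin m => if h2 : ((c : ℕ) + (t1 : ℕ)) < g - 1 then
              z ⟨(c : ℕ) + (t1 : ℕ), h2⟩ else a)
            = fun j : Fin m => z ⟨(c : ℕ) + (j : ℕ), by have := j.isLt; omega⟩ :=
          funext fun t1 => dif_pos (by have := t1.isLt; omega)
        have hwb : (fun t1 : Fin m => if h2 : ((c : ℕ) + (t1 : ℕ)) < g - 1 then
              z ⟨(c : ℕ) + (t1 : ℕ), h2⟩ else b)
            = fun j : Fin m => z ⟨(c : ℕ) + (j : ℕ), by have := j.isLt; omega⟩ :=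
          funext fun t1 => dif_pos (by have := t1.isLt; omega)
        rw [hZ, hθp, hwa, hwb, Finset.prod_mul_distrib]
        ring
      refine Eq.trans (Finset.sum_congr rfl fun z _ => hstep z) ?_
      refine Eq.trans (sum_window
        (fun j : Fin m => (⟨(c : ℕ) + (j : ℕ), by have := j.isLt; omega⟩ : Fin (g - 1)))
        (fun x y hxy => by
          have h2 : (c : ℕ) + (x : ℕ) = (c : ℕ) + (y : ℕ) := congrArg Fin.val hxy
          exact Fin.ext (by omega))
        (fun s t => (if (s : ℕ) < (c : ℕ) then ζ t t else 1) *
          (if (c : ℕ) + m ≤ (s : ℕ) then θ t t else 1))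
        (fun j t => by
          have h1 : ¬((c : ℕ) + (j : ℕ) < (c : ℕ)) := by omega
          have h2 : ¬((c : ℕ) + m ≤ (c : ℕ) + (j : ℕ)) := by have := j.isLt; omega
          show (if ((⟨(c : ℕ) + (j : ℕ), by have := j.isLt; omega⟩ : Fin (g - 1)) : ℕ) < (c : ℕ)
              then ζ t t else 1) *
            (if (c : ℕ) + m ≤ ((⟨(c : ℕ) + (j : ℕ), by have := j.isLt; omega⟩ : Fin (g - 1)) : ℕ)
              then θ t t else 1) = 1
          rw [if_neg h1, if_neg h2, one_mul])
        (fun s hs => by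
          by_cases hsc : (s : ℕ) < (c : ℕ)
          · rw [Finset.sum_congr rfl fun t (_ : t ∈ Finset.univ) =>
              show (if (s : ℕ) < (c : ℕ) then ζ t t else 1) *
                  (if (c : ℕ) + m ≤ (s : ℕ) then θ t t else 1) = ζ t t from by
                rw [if_pos hsc, if_neg (by have := s.isLt; omega), mul_one]]
            exact htrζ
          · by_cases hsm : (c : ℕ) + m ≤ (s : ℕ)
            · rw [Finset.sum_congr rfl fun t (_ : t ∈ Finset.univ) =>
                show (if (s : ℕ) < (c : ℕ) then ζ t t else 1) *
                    (if (c : ℕ) + m ≤ (s : ℕ) then θ t t else 1) = θ t t from by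
                  rw [if_neg hsc, if_pos hsm, one_mul]]
              exact htrθ
            · exact absurd (Fin.ext (show ((c : ℕ) + (((s : ℕ) - (c : ℕ) : ℕ)) : ℕ) = (s : ℕ)
                by omega) : (⟨(c : ℕ) + (((s : ℕ) - (c : ℕ) : ℕ)), by have := s.isLt; omega⟩
                  : Fin (g - 1)) = s)
                (hs ⟨(s : ℕ) - (c : ℕ), by have := s.isLt; omega⟩))
        (fun w => (1 / (g : ℂ)) * θ a b * η w w)) ?_
      rw [← Finset.mul_sum, htrη, mul_one, dif_pos hcm]
    · -- margFirst case
      have hstep : ∀ z : Fin (g - 1) → T,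
          ((1 / (g : ℂ) * ∏ s : Fin g, if (s : ℕ) < (c : ℕ) then
            ζ (if h : (s : ℕ) < g - 1 then z ⟨s, h⟩ else a)
              (if h : (s : ℕ) < g - 1 then z ⟨s, h⟩ else b) else 1) *
          (if h : (c : ℕ) < g - m then
            η (fun t1 : Fin m => if h2 : ((c : ℕ) + (t1 : ℕ)) < g - 1 then
                z ⟨(c : ℕ) + (t1 : ℕ), h2⟩ else a)
              (fun t1 : Fin m => if h2 : ((c : ℕ) + (t1 : ℕ)) < g - 1 then
                z ⟨(c : ℕ) + (t1 : ℕ), h2⟩ else b) *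
              ∏ s : Fin g, if (c : ℕ) + m ≤ (s : ℕ) then
                θ (if h2 : (s : ℕ) < g - 1 then z ⟨s, h2⟩ else a)
                  (if h2 : (s : ℕ) < g - 1 then z ⟨s, h2⟩ else b) else 1
          else
            margFirst η (g - (c : ℕ)) (by omega)
              (fun t1 : Fin (g - (c : ℕ)) => if h2 : ((c : ℕ) + (t1 : ℕ)) < g - 1 then
                z ⟨(c : ℕ) + (t1 : ℕ), h2⟩ else a)
              (fun t1 : Fin (g - (c : ℕ)) => if h2 : ((c : ℕ) + (t1 : ℕ)) < g - 1 then
                z ⟨(c : ℕ) + (t1 : ℕ), h2⟩ else b)))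
          = (∏ s : Fin (g - 1), if (s : ℕ) < (c : ℕ) then ζ (z s) (z s) else 1) *
            ((1 / (g : ℂ)) * margFirst η (g - (c : ℕ)) (by omega)
              (fun s : Fin (g - (c : ℕ)) => if h2 : (s : ℕ) < g - 1 - (c : ℕ) then
                (fun j : Fin (g - 1 - (c : ℕ)) =>
                  z ⟨(c : ℕ) + (j : ℕ), by have := j.isLt; omega⟩) ⟨s, h2⟩ else a)
              (fun s : Fin (g - (c : ℕ)) => if h2 : (s : ℕ) < g - 1 - (c : ℕ) then
                (fun j : Fin (g - 1 - (c : ℕ)) =>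
                  z ⟨(c : ℕ) + (j : ℕ), by have := j.isLt; omega⟩) ⟨s, h2⟩ else b)) := by
        intro z
        rw [dif_neg hcm]
        have hZ : (∏ s : Fin g, if (s : ℕ) < (c : ℕ) then
            ζ (if h : (s : ℕ) < g - 1 then z ⟨s, h⟩ else a)
              (if h : (s : ℕ) < g - 1 then z ⟨s, h⟩ else b) else 1)
            = ∏ s : Fin (g - 1), if (s : ℕ) < (c : ℕ) then ζ (z s) (z s) else 1 := by
          rw [prod_fin_last hg]
          have hlast : (if ((⟨g - 1, by omega⟩ : Fin g) : ℕ) < (c : ℕ) then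
              ζ (if h : ((⟨g - 1, by omega⟩ : Fin g) : ℕ) < g - 1 then z ⟨_, h⟩ else a)
                (if h : ((⟨g - 1, by omega⟩ : Fin g) : ℕ) < g - 1 then z ⟨_, h⟩ else b) else 1)
              = 1 := if_neg (by show ¬(g - 1 < (c : ℕ)); omega)
          rw [hlast, mul_one]
          refine Finset.prod_congr rfl fun s _ => ?_
          by_cases hsc : (s : ℕ) < (c : ℕ)
          · refine (if_pos hsc).trans (Eq.trans ?_ (if_pos hsc).symm)
            exact congrArg₂ ζ ((dif_pos s.isLt).trans (congrArg z (Fin.ext rfl)))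
              ((dif_pos s.isLt).trans (congrArg z (Fin.ext rfl)))
          · exact (if_neg hsc).trans (if_neg hsc).symm
        rw [hZ]
        refine Eq.trans (congrArg (HMul.hMul _) (congrArg₂ (margFirst η (g - (c : ℕ)) (by omega))
          (funext fun s => ?_) (funext fun s => ?_))) (by ring)
        · by_cases h2 : (s : ℕ) < g - 1 - (c : ℕ)
          · refine (dif_pos (by omega)).trans (Eq.trans ?_ (dif_pos h2).symm)
            exact congrArg z (Fin.ext rfl)
          · refine (dif_neg (by omega)).trans ?_
            exact (dif_neg h2 : (if h2' : (s : ℕ) < g - 1 - (c : ℕ) then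
              (fun j : Fin (g - 1 - (c : ℕ)) =>
                z ⟨(c : ℕ) + (j : ℕ), by have := j.isLt; omega⟩) ⟨s, h2'⟩ else a) = a).symm
        · by_cases h2 : (s : ℕ) < g - 1 - (c : ℕ)
          · refine (dif_pos (by omega)).trans (Eq.trans ?_ (dif_pos h2).symm)
            exact congrArg z (Fin.ext rfl)
          · refine (dif_neg (by omega)).trans ?_
            exact (dif_neg h2 : (if h2' : (s : ℕ) < g - 1 - (c : ℕ) then
              (fun j : Fin (g - 1 - (c : ℕ)) =>
                z ⟨(c : ℕ) + (j : ℕ), by have := j.isLt; omega⟩) ⟨s, h2'⟩ else b) = b).symm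
      refine Eq.trans (Finset.sum_congr rfl fun z _ => hstep z) ?_
      refine Eq.trans (sum_window
        (fun j : Fin (g - 1 - (c : ℕ)) =>
          (⟨(c : ℕ) + (j : ℕ), by have := j.isLt; omega⟩ : Fin (g - 1)))
        (fun x y hxy => by
          have h2 : (c : ℕ) + (x : ℕ) = (c : ℕ) + (y : ℕ) := congrArg Fin.val hxy
          exact Fin.ext (by omega))
        (fun s t => if (s : ℕ) < (c : ℕ) then ζ t t else 1)
        (fun j t => by
          show (if ((⟨(c : ℕ) + (j : ℕ), by have := j.isLt; omega⟩ : Fin (g - 1)) : ℕ) < (c : ℕ)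
              then ζ t t else 1) = 1
          exact if_neg (by show ¬((c : ℕ) + (j : ℕ) < (c : ℕ)); omega))
        (fun s hs => by
          by_cases hsc : (s : ℕ) < (c : ℕ)
          · rw [Finset.sum_congr rfl fun t (_ : t ∈ Finset.univ) =>
              if_pos hsc]
            exact htrζ
          · exact absurd (Fin.ext (show ((c : ℕ) + (((s : ℕ) - (c : ℕ) : ℕ)) : ℕ) = (s : ℕ)
              by omega) : (⟨(c : ℕ) + (((s : ℕ) - (c : ℕ) : ℕ)), by have := s.isLt; omega⟩
                : Fin (g - 1)) = s)
              (hs ⟨(s : ℕ) - (c : ℕ), by have := s.isLt; omega⟩))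
        (fun w => (1 / (g : ℂ)) * margFirst η (g - (c : ℕ)) (by omega)
          (fun s : Fin (g - (c : ℕ)) => if h2 : (s : ℕ) < g - 1 - (c : ℕ) then
            w ⟨s, h2⟩ else a)
          (fun s : Fin (g - (c : ℕ)) => if h2 : (s : ℕ) < g - 1 - (c : ℕ) then
            w ⟨s, h2⟩ else b))) ?_
      rw [← Finset.mul_sum,
        margFirst_sum_off η (show g - (c : ℕ) = (g - 1 - (c : ℕ)) + 1 by omega)
          (by omega) (by omega) a b]
      rw [dif_neg hcm]
  have h1 : ∀ c : Fin g,
      (if h : (c : ℕ) < g - m then (1 / (g : ℂ)) * θ a b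
        else (1 / (g : ℂ)) * marginalAt η ⟨g - 1 - (c : ℕ), by omega⟩ a b)
      = (fun k : ℕ => if k < g - m then (1 / (g : ℂ)) * θ a b
          else (1 / (g : ℂ)) *
            (if h : g - 1 - k < m then marginalAt η ⟨g - 1 - k, h⟩ a b else 0)) (c : ℕ) := by
    intro c
    by_cases hcm : (c : ℕ) < g - m
    · rw [dif_pos hcm]
      exact (if_pos hcm).symm
    · rw [dif_neg hcm]
      refine Eq.trans ?_ (if_neg hcm).symm
      have hlt : g - 1 - (c : ℕ) < m := by have := c.isLt; omega
      exact congrArg (HMul.hMul ((1 : ℂ) / g))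
        ((dif_pos hlt :
          (if h : g - 1 - (c : ℕ) < m then marginalAt η ⟨g - 1 - (c : ℕ), h⟩ a b else 0)
            = marginalAt η ⟨g - 1 - (c : ℕ), hlt⟩ a b).symm)
  refine Eq.trans (Finset.sum_congr rfl fun c _ =>
    Eq.trans (Finset.sum_congr rfl fun z _ => if_pos rfl) ((hc c).trans (h1 c))) ?_
  refine Eq.trans (Fin.sum_univ_eq_sum_range (fun k : ℕ => if k < g - m then
    (1 / (g : ℂ)) * θ a b
    else (1 / (g : ℂ)) *
      (if h : g - 1 - k < m then marginalAt η ⟨g - 1 - k, h⟩ a b else 0)) g) ?_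
  rw [Finset.range_eq_Ico, ← Finset.sum_Ico_consecutive _ (Nat.zero_le (g - m))
    (show g - m ≤ g by omega)]
  have hA : (∑ k ∈ Finset.Ico 0 (g - m), (fun k : ℕ => if k < g - m then (1 / (g : ℂ)) * θ a b
          else (1 / (g : ℂ)) *
            (if h : g - 1 - k < m then marginalAt η ⟨g - 1 - k, h⟩ a b else 0)) k)
      = ((g - m : ℕ) : ℂ) * ((1 / (g : ℂ)) * θ a b) := by
    rw [Finset.sum_congr rfl fun k hk => if_pos (Finset.mem_Ico.mp hk).2]
    rw [Finset.sum_const, Nat.card_Ico, Nat.sub_zero, nsmul_eq_mul]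
  have hB : (∑ k ∈ Finset.Ico (g - m) g, (fun k : ℕ => if k < g - m then (1 / (g : ℂ)) * θ a b
          else (1 / (g : ℂ)) *
            (if h : g - 1 - k < m then marginalAt η ⟨g - 1 - k, h⟩ a b else 0)) k)
      = ∑ k ∈ Finset.range m, (fun k' : ℕ => if h : k' < m then
          (1 / (g : ℂ)) * marginalAt η ⟨k', h⟩ a b else 0) k := by
    refine Finset.sum_nbij' (fun k => g - 1 - k) (fun k => g - 1 - k) ?_ ?_ ?_ ?_ ?_
    · intro k hk
      have h2 := Finset.mem_Ico.mp hk
      exact Finset.mem_range.mpr (show g - 1 - k < m by omega)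
    · intro k hk
      have h2 := Finset.mem_range.mp hk
      exact Finset.mem_Ico.mpr (show g - m ≤ g - 1 - k ∧ g - 1 - k < g by omega)
    · intro k hk
      have h2 := Finset.mem_Ico.mp hk
      show g - 1 - (g - 1 - k) = k
      omega
    · intro k hk
      have h2 := Finset.mem_range.mp hk
      show g - 1 - (g - 1 - k) = k
      omega
    · intro k hk
      have hk2 := Finset.mem_Ico.mp hk
      have hlt : g - 1 - k < m := by omega
      show (if k < g - m then (1 / (g : ℂ)) * θ a b
          else (1 / (g : ℂ)) *
            (if h : g - 1 - k < m then marginalAt η ⟨g - 1 - k, h⟩ a b else 0))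
        = (if h : g - 1 - k < m then (1 / (g : ℂ)) * marginalAt η ⟨g - 1 - k, h⟩ a b else 0)
      rw [if_neg (show ¬k < g - m by omega), dif_pos hlt, dif_pos hlt]
  have hC : (∑ i : Fin m, (1 / (g : ℂ)) * marginalAt η i a b)
      = ∑ k ∈ Finset.range m, (fun k' : ℕ => if h : k' < m then
          (1 / (g : ℂ)) * marginalAt η ⟨k', h⟩ a b else 0) k := by
    rw [← Fin.sum_univ_eq_sum_range]
    refine Finset.sum_congr rfl fun i _ => ?_
    exact (dif_pos i.isLt :
      (if h : (i : ℕ) < m then (1 / (g : ℂ)) * marginalAt η ⟨(i : ℕ), h⟩ a b else 0)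
        = (1 / (g : ℂ)) * marginalAt η ⟨(i : ℕ), i.isLt⟩ a b).symm
  rw [hA, hB, ← hC]
  simp only [Matrix.add_apply, Matrix.smul_apply, Matrix.sum_apply, smul_eq_mul]
  rw [Nat.cast_sub hmg, ← Finset.mul_sum]
  have hgne : (g : ℂ) ≠ 0 := Nat.cast_ne_zero.mpr (by omega)
  have hmne : (m : ℂ) ≠ 0 := Nat.cast_ne_zero.mpr (by omega)
  field_simp
  ring

end Aux

/-- (a) Tracing the `g`-th `T`-factor of `ν₂` returns the catalyst `ω`;
(b) tracing the first `g−1` `T`-factors and the register yields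
`(m/g)·ν'' + (1−m/g)·θ` with `ν'' = (1/m) ∑ η_i`; (c) under the stated support/orthogonality
conditions, measuring the projector `P_V` on this state succeeds with probability `m/g`
with post-measurement state `ν''`. -/
theorem nu2g_properties {T : Type} [Fintype T] [DecidableEq T] {g m : ℕ}
    (hm : 1 ≤ m) (hmg : m ≤ g)
    (ζ θ : Matrix T T ℂ) (hζ : IsState ζ) (hθ : IsState θ)
    (η : Matrix (Fin m → T) (Fin m → T) ℂ) (hη : IsState η) :
    ptraceLastBlock (nu2g g ζ θ η) = omegag g ζ θ η ∧
    ptraceAllButLast (nu2g g ζ θ η) =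
      ((m : ℂ) / g) • ((1 / (m : ℂ)) • ∑ i : Fin m, marginalAt η i) +
        (1 - (m : ℂ) / g) • θ ∧
    (∀ (PV QW : Matrix T T ℂ),
      PV.IsHermitian → PV * PV = PV → QW.IsHermitian → QW * QW = QW → PV * QW = 0 →
      (∀ i : Fin m, PV * marginalAt η i * PV = marginalAt η i) →
      QW * θ * QW = θ →
      (PV * (((m : ℂ) / g) • ((1 / (m : ℂ)) • ∑ i : Fin m, marginalAt η i) +
          (1 - (m : ℂ) / g) • θ) * PV).trace = ((m : ℂ) / g) ∧
      PV * (((m : ℂ) / g) • ((1 / (m : ℂ)) • ∑ i : Fin m, marginalAt η i) +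
          (1 - (m : ℂ) / g) • θ) * PV =
        ((m : ℂ) / g) • ((1 / (m : ℂ)) • ∑ i : Fin m, marginalAt η i)) := by
  refine ⟨parta hm hmg ζ θ hθ.2 η, ?_, ?_⟩
  · funext a b
    exact partb hm hmg ζ θ hζ.2 hθ.2 η hη.2 a b
  · intro PV QW hPVh hPV2 hQWh hQW2 hPQ hsup hθsup
    have hmain := partc (g := g) hm θ η PV QW hPVh hQWh hPQ hsup hθsup
    refine ⟨?_, hmain⟩
    rw [hmain]
    rw [Matrix.trace_smul, Matrix.trace_smul, Matrix.trace_sum]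
    rw [Finset.sum_congr rfl fun i (_ : i ∈ Finset.univ) =>
      (trace_marginalAt η i).trans hη.2]
    have hmne : (m : ℂ) ≠ 0 := Nat.cast_ne_zero.mpr (by omega)
    simp only [Finset.sum_const, Finset.card_univ, Fintype.card_fin, nsmul_eq_mul,
      mul_one, smul_eq_mul]
    field_simp

end PaperQI
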